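/- arXiv:1912.13287 — 2 statements merged into one kernel-verified Lean document; each statement's English description precedes it below -/
import Mathlib

section
/- (Erdős–Gallai) A non-increasing sequence D = (d_1,...,d_n) of nonnegative integers is graphic if and only if Σ_{i=1}^n d_i is even and, for every k ∈ [1,n], Σ_{i=1}^k d_i ≤ k(k−1) + Σ_{i=k+1}^n min(d_i, k). -/
open Finset

/-- A sequence is graphic if it is the degree sequence of a simple graph. -/
def IsGraphic {n : ℕ} (D : Fin n → ℕ) : Prop :=
  ∃ (G : SimpleGraph (Fin n)) (_ : DecidableRel G.Adj), ∀ i, G.degree i = D i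

/-- The levelling operation: decrement entry `α` by 1, increment entry `β` by 1. -/
def lvl {n : ℕ} (D : Fin n → ℕ) (α β : Fin n) : Fin n → ℕ :=
  fun i => if i = α then D α - 1 else if i = β then D β + 1 else D i

/-- The spread `φ(D) = ∑_{r<s} |d_r - d_s|`. -/
def spread {n : ℕ} (D : Fin n → ℕ) : ℤ :=
  ∑ r : Fin n, ∑ s : Fin n, if r < s then |(D r : ℤ) - (D s : ℤ)| else 0

/-- `A ≤ D ≤ B` coordinatewise. -/
def Between {n : ℕ} (A D B : Fin n → ℕ) : Prop := ∀ i, A i ≤ D i ∧ D i ≤ B i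

/-- Volume of `D` w.r.t. lower boundary `A`. -/
def vol {n : ℕ} (A D : Fin n → ℕ) : ℕ := ∑ i, (D i - A i)

/-- An interval sequence `(A,B)` is realizable if it contains a graphic sequence. -/
def Realizable {n : ℕ} (A B : Fin n → ℕ) : Prop := ∃ D, IsGraphic D ∧ Between A D B

/-- Two sequences are similar if one is a permutation of the other. -/
def SeqSimilar {n : ℕ} (D D' : Fin n → ℕ) : Prop :=
  ∃ σ : Equiv.Perm (Fin n), ∀ i, D' i = D (σ i)

/-- `D` is levelled w.r.t. `(A,B)`: it lies in `[A,B]` and no levelling operation staying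
within `[A,B]` strictly decreases its spread. -/
def IsLevelled {n : ℕ} (A B D : Fin n → ℕ) : Prop :=
  Between A D B ∧ ∀ α β : Fin n, α ≠ β → D β < D α → Between A (lvl D α β) B →
    spread D ≤ spread (lvl D α β)

/-- One levelling step from `D` to `D'` staying within `[A,B]`. -/
def LvlStep {n : ℕ} (A B D D' : Fin n → ℕ) : Prop :=
  ∃ α β : Fin n, α ≠ β ∧ D β < D α ∧ D' = lvl D α β ∧ Between A D' B

/-- `F(ℓ,S) = ∑_i (min(ℓ,b_i) - min(ℓ,a_i))`. -/
noncomputable def Fvol {n : ℕ} (A B : Fin n → ℕ) (ℓ : ℝ) : ℝ :=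
  ∑ i, (min ℓ (B i : ℝ) - min ℓ (A i : ℝ))

/-- Upper deviation `δ_U(D,S) = ∑_i max(0, d_i - b_i)` (truncated subtraction). -/
def devU {n : ℕ} (D B : Fin n → ℕ) : ℕ := ∑ i, (D i - B i)

/-- Lower deviation `δ_L(D,S) = ∑_i max(0, a_i - d_i)` (truncated subtraction). -/
def devL {n : ℕ} (D A : Fin n → ℕ) : ℕ := ∑ i, (A i - D i)

/-- `R` lies in `[B,⊤]`, `(A,R)` is realizable, and `∑ (r_i - b_i)` is minimum. -/
def MinUpper {n : ℕ} (A B R : Fin n → ℕ) : Prop :=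
  (∀ i, B i ≤ R i ∧ R i ≤ n - 1) ∧ Realizable A R ∧
  ∀ R' : Fin n → ℕ, (∀ i, B i ≤ R' i ∧ R' i ≤ n - 1) → Realizable A R' →
    ∑ i, (R i - B i) ≤ ∑ i, (R' i - B i)

namespace EG16


section Graph
variable {V : Type*} [Fintype V] [DecidableEq V]

/-- Add the edge `a b` to `G`. -/
def addE (G : SimpleGraph V) (a b : V) (hab : a ≠ b) : SimpleGraph V where
  Adj x y := G.Adj x y ∨ (x = a ∧ y = b) ∨ (x = b ∧ y = a)
  symm := by
    constructor
    rintro x y (h | ⟨rfl, rfl⟩ | ⟨rfl, rfl⟩)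
    · exact Or.inl (G.adj_symm h)
    · exact Or.inr (Or.inr ⟨rfl, rfl⟩)
    · exact Or.inr (Or.inl ⟨rfl, rfl⟩)
  loopless := by
    constructor
    rintro x (h | ⟨h1, h2⟩ | ⟨h1, h2⟩)
    · exact G.loopless.irrefl x h
    · exact hab (h1.symm.trans h2)
    · exact hab (h2.symm.trans h1)

omit [Fintype V] [DecidableEq V] in
lemma addE_adj (G : SimpleGraph V) (a b : V) (hab : a ≠ b) (x y : V) :
    (addE G a b hab).Adj x y ↔ G.Adj x y ∨ (x = a ∧ y = b) ∨ (x = b ∧ y = a) := Iff.rfl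

instance (G : SimpleGraph V) [DecidableRel G.Adj] (a b : V) (hab : a ≠ b) :
    DecidableRel (addE G a b hab).Adj := fun x y => by
  rw [addE_adj]; infer_instance

lemma addE_degree (G : SimpleGraph V) [DecidableRel G.Adj] {a b : V}
    (hab : a ≠ b) (hna : ¬ G.Adj a b) (i : V) :
    (addE G a b hab).degree i = G.degree i + (if i = a ∨ i = b then 1 else 0) := by
  classical
  by_cases hia : i = a
  · subst hia
    have h1 : (addE G i b hab).neighborFinset i = insert b (G.neighborFinset i) := by
      ext j
      simp only [SimpleGraph.mem_neighborFinset, addE_adj, mem_insert]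
      constructor
      · intro h; tauto
      · rintro (rfl | h)
        · exact Or.inr (Or.inl (by simp))
        · exact Or.inl h
    have h2 : b ∉ G.neighborFinset i := by
      simp only [SimpleGraph.mem_neighborFinset]; exact hna
    simp only [SimpleGraph.degree, h1, card_insert_of_notMem h2]
    simp
  · by_cases hib : i = b
    · subst hib
      have h1 : (addE G a i hab).neighborFinset i = insert a (G.neighborFinset i) := by
        ext j
        simp only [SimpleGraph.mem_neighborFinset, addE_adj, mem_insert]
        constructor
        · intro h
          rcases h with h | ⟨h1, -⟩ | ⟨-, rfl⟩
          · exact Or.inr h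
          · exact absurd h1.symm hab
          · exact Or.inl rfl
        · rintro (rfl | h)
          · exact Or.inr (Or.inr (by simp))
          · exact Or.inl h
      have h2 : a ∉ G.neighborFinset i := by
        simp only [SimpleGraph.mem_neighborFinset]
        intro h; exact hna (G.adj_symm h)
      simp only [SimpleGraph.degree, h1, card_insert_of_notMem h2]
      simp
    · have h1 : (addE G a b hab).neighborFinset i = G.neighborFinset i := by
        ext j
        simp only [SimpleGraph.mem_neighborFinset, addE_adj]
        constructor
        · rintro (h | ⟨h1, -⟩ | ⟨h1, -⟩)
          · exact h
          · exact absurd h1 hia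
          · exact absurd h1 hib
        · exact fun h => Or.inl h
      simp only [SimpleGraph.degree, h1]
      simp [hia, hib]

end Graph



section Graph
variable {V : Type*} [Fintype V] [DecidableEq V]

/-- The 2-switch: delete edges `a-b`, `u-v`; add edges `a-u`, `b-v`. -/
def switchE (G : SimpleGraph V) (a b u v : V) (nau : a ≠ u) (nbv : b ≠ v) : SimpleGraph V where
  Adj x y :=
    (G.Adj x y ∧ ¬((x = a ∧ y = b) ∨ (x = b ∧ y = a) ∨ (x = u ∧ y = v) ∨ (x = v ∧ y = u))) ∨
      (x = a ∧ y = u) ∨ (x = u ∧ y = a) ∨ (x = b ∧ y = v) ∨ (x = v ∧ y = b)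
  symm := by
    constructor
    rintro x y (⟨h, hn⟩ | h)
    · exact Or.inl ⟨G.adj_symm h, by tauto⟩
    · tauto
  loopless := by
    constructor
    rintro x (⟨h, -⟩ | h)
    · exact G.loopless.irrefl x h
    · rcases h with ⟨e1, e2⟩ | ⟨e1, e2⟩ | ⟨e1, e2⟩ | ⟨e1, e2⟩ <;>
        first
        | exact nau (e1.symm.trans e2)
        | exact nau (e2.symm.trans e1)
        | exact nbv (e1.symm.trans e2)
        | exact nbv (e2.symm.trans e1)

lemma switchE_adj (G : SimpleGraph V) (a b u v : V) (nau : a ≠ u) (nbv : b ≠ v) (x y : V) :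
    (switchE G a b u v nau nbv).Adj x y ↔
    (G.Adj x y ∧ ¬((x = a ∧ y = b) ∨ (x = b ∧ y = a) ∨ (x = u ∧ y = v) ∨ (x = v ∧ y = u))) ∨
      (x = a ∧ y = u) ∨ (x = u ∧ y = a) ∨ (x = b ∧ y = v) ∨ (x = v ∧ y = b) := Iff.rfl

instance (G : SimpleGraph V) [DecidableRel G.Adj] (a b u v : V) (nau : a ≠ u) (nbv : b ≠ v) :
    DecidableRel (switchE G a b u v nau nbv).Adj := fun x y => by
  rw [switchE_adj]; infer_instance

lemma card_insert_erase {G : SimpleGraph V} [DecidableRel G.Adj]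
    (x p q : V) (hpq : p ≠ q) (hxq : G.Adj x q) (hxp : ¬ G.Adj x p) :
    (insert p ((G.neighborFinset x).erase q)).card = G.degree x := by
  have hq : q ∈ G.neighborFinset x := by rwa [SimpleGraph.mem_neighborFinset]
  have hp : p ∉ (G.neighborFinset x).erase q := by
    rw [mem_erase, SimpleGraph.mem_neighborFinset]; tauto
  have hpos : 0 < (G.neighborFinset x).card := card_pos.mpr ⟨q, hq⟩
  rw [card_insert_of_notMem hp, card_erase_of_mem hq]
  rw [SimpleGraph.degree]; omega

lemma switchE_degree (G : SimpleGraph V) [DecidableRel G.Adj] {a b u v : V}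
    (h1 : G.Adj a b) (h2 : G.Adj u v) (hau : ¬ G.Adj a u) (hbv : ¬ G.Adj b v)
    (nau : a ≠ u) (nbv : b ≠ v) (i : V) :
    (switchE G a b u v nau nbv).degree i = G.degree i := by
  classical
  have nab : a ≠ b := G.ne_of_adj h1
  have nuv : u ≠ v := G.ne_of_adj h2
  have nav : a ≠ v := fun h => hau (G.adj_symm (h ▸ h2))
  have nbu : b ≠ u := fun h => hbv (h ▸ h2)
  by_cases hia : i = a
  · subst hia
    have key : (switchE G i b u v nau nbv).neighborFinset i
        = insert u ((G.neighborFinset i).erase b) := by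
      ext j
      rw [SimpleGraph.mem_neighborFinset, switchE_adj, mem_insert, mem_erase,
        SimpleGraph.mem_neighborFinset]
      constructor
      · rintro (⟨h, hn⟩ | h) <;> [skip; tauto]
        exact Or.inr ⟨by tauto, h⟩
      · rintro (rfl | ⟨hjb, h⟩)
        · tauto
        · exact Or.inl ⟨h, by tauto⟩
    rw [SimpleGraph.degree, key, card_insert_erase i u b (Ne.symm nbu) h1 hau]
  · by_cases hib : i = b
    · subst hib
      have key : (switchE G a i u v nau nbv).neighborFinset i
          = insert v ((G.neighborFinset i).erase a) := by
        ext j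
        rw [SimpleGraph.mem_neighborFinset, switchE_adj, mem_insert, mem_erase,
          SimpleGraph.mem_neighborFinset]
        constructor
        · rintro (⟨h, hn⟩ | h) <;> [skip; tauto]
          exact Or.inr ⟨by tauto, h⟩
        · rintro (rfl | ⟨hja, h⟩)
          · tauto
          · exact Or.inl ⟨h, by tauto⟩
      rw [SimpleGraph.degree, key, card_insert_erase i v a (Ne.symm nav) (G.adj_symm h1) hbv]
    · by_cases hiu : i = u
      · subst hiu
        have key : (switchE G a b i v nau nbv).neighborFinset i
            = insert a ((G.neighborFinset i).erase v) := by
          ext j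
          rw [SimpleGraph.mem_neighborFinset, switchE_adj, mem_insert, mem_erase,
            SimpleGraph.mem_neighborFinset]
          constructor
          · rintro (⟨h, hn⟩ | h) <;> [skip; tauto]
            exact Or.inr ⟨by tauto, h⟩
          · rintro (rfl | ⟨hjv, h⟩)
            · tauto
            · exact Or.inl ⟨h, by tauto⟩
        rw [SimpleGraph.degree, key,
          card_insert_erase i a v nav h2 (fun h => hau (G.adj_symm h))]
      · by_cases hiv : i = v
        · subst hiv
          have key : (switchE G a b u i nau nbv).neighborFinset i
              = insert b ((G.neighborFinset i).erase u) := by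
            ext j
            rw [SimpleGraph.mem_neighborFinset, switchE_adj, mem_insert, mem_erase,
              SimpleGraph.mem_neighborFinset]
            constructor
            · rintro (⟨h, hn⟩ | h) <;> [skip; tauto]
              exact Or.inr ⟨by tauto, h⟩
            · rintro (rfl | ⟨hju, h⟩)
              · tauto
              · exact Or.inl ⟨h, by tauto⟩
          rw [SimpleGraph.degree, key,
            card_insert_erase i b u nbu (G.adj_symm h2) (fun h => hbv (G.adj_symm h))]
        · have key : (switchE G a b u v nau nbv).neighborFinset i = G.neighborFinset i := by
            ext j
            rw [SimpleGraph.mem_neighborFinset, switchE_adj, SimpleGraph.mem_neighborFinset]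
            constructor
            · rintro (⟨h, -⟩ | h) <;> tauto
            · intro h
              exact Or.inl ⟨h, by tauto⟩
          rw [SimpleGraph.degree, SimpleGraph.degree, key]

lemma switchE_not_adj (G : SimpleGraph V) {a b u v : V}
    (nau : a ≠ u) (nbv : b ≠ v) (nab : a ≠ b) (nbu : b ≠ u) (nav : a ≠ v) :
    ¬ (switchE G a b u v nau nbv).Adj a b := by
  rw [switchE_adj]
  push_neg
  refine ⟨fun _ => Or.inl ⟨rfl, rfl⟩, ?_⟩
  tauto

end Graph



def egf (f : ℕ → ℕ) (n : ℕ) : Prop :=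
  ∀ k, 1 ≤ k → k ≤ n →
    ∑ i ∈ range k, f i ≤ k * (k - 1) + ∑ i ∈ Ico k n, min (f i) k

lemma sum_split (f : ℕ → ℕ) {x y z : ℕ} (h1 : x ≤ y) (h2 : y ≤ z) :
    ∑ i ∈ Ico x z, f i = ∑ i ∈ Ico x y, f i + ∑ i ∈ Ico y z, f i :=
  (sum_Ico_consecutive _ h1 h2).symm

lemma sum_dec_two {f f' : ℕ → ℕ} {a b : ℕ} (s : Finset ℕ) (hab : a ≠ b)
    (ha : a ∈ s) (hb : b ∈ s)
    (hf' : ∀ i, f' i = if i = a ∨ i = b then f i - 1 else f i)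
    (h1 : 1 ≤ f a) (h2 : 1 ≤ f b) :
    ∑ i ∈ s, f i = (∑ i ∈ s, f' i) + 2 := by
  have key : ∀ i ∈ s, f i = f' i + ((if i = a then 1 else 0) + (if i = b then 1 else 0)) := by
    intro i _
    rcases eq_or_ne i a with rfl | hia
    · rw [hf', if_pos (Or.inl rfl), if_pos rfl, if_neg hab]
      omega
    · rcases eq_or_ne i b with rfl | hib
      · rw [hf', if_pos (Or.inr rfl), if_neg hia, if_pos rfl]
        omega
      · rw [hf', if_neg (by tauto), if_neg hia, if_neg hib]
        omega
  rw [sum_congr rfl key, sum_add_distrib, sum_add_distrib, sum_ite_eq' s a fun _ => 1,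
    sum_ite_eq' s b fun _ => 1, if_pos ha, if_pos hb]

lemma sum_dec_one {f f' : ℕ → ℕ} {a b : ℕ} (s : Finset ℕ)
    (ha : a ∈ s) (hb : b ∉ s)
    (hf' : ∀ i, f' i = if i = a ∨ i = b then f i - 1 else f i)
    (h1 : 1 ≤ f a) :
    ∑ i ∈ s, f i = (∑ i ∈ s, f' i) + 1 := by
  have key : ∀ i ∈ s, f i = f' i + (if i = a then 1 else 0) := by
    intro i hi
    have hib : i ≠ b := fun h => hb (h ▸ hi)
    rcases eq_or_ne i a with rfl | hia
    · rw [hf', if_pos (Or.inl rfl), if_pos rfl]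
      omega
    · rw [hf', if_neg (by tauto), if_neg hia]
      omega
  rw [sum_congr rfl key, sum_add_distrib, sum_ite_eq' s a fun _ => 1, if_pos ha]

lemma sum_eq_of_ne {f f' : ℕ → ℕ} {a b : ℕ} (s : Finset ℕ)
    (ha : a ∉ s) (hb : b ∉ s)
    (hf' : ∀ i, f' i = if i = a ∨ i = b then f i - 1 else f i) :
    ∑ i ∈ s, f' i = ∑ i ∈ s, f i := by
  refine sum_congr rfl fun i hi => ?_
  have h1 : i ≠ a := fun h => ha (h ▸ hi)
  have h2 : i ≠ b := fun h => hb (h ▸ hi)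
  rw [hf', if_neg (by tauto)]

lemma step {n : ℕ} {f : ℕ → ℕ} (hant : Antitone f) (hn : ∀ i, n ≤ i → f i = 0)
    (heven : Even (∑ i ∈ range n, f i)) (heg : egf f n)
    (hpos : ∑ i ∈ range n, f i ≠ 0) :
    ∃ a b f', a < b ∧ b < n ∧ 1 ≤ f a ∧ 1 ≤ f b ∧ f a ≤ b ∧
      (∀ i, f' i = if i = a ∨ i = b then f i - 1 else f i) ∧
      Antitone f' ∧ (∀ i, n ≤ i → f' i = 0) ∧
      (∑ i ∈ range n, f' i) + 2 = ∑ i ∈ range n, f i ∧ egf f' n := by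
  classical
  -- basic setup
  have hn0 : 0 < n := by
    rcases Nat.eq_zero_or_pos n with rfl | h
    · simp at hpos
    · exact h
  have hex : ∃ i, f i = 0 := ⟨n, hn n le_rfl⟩
  set m := Nat.find hex with hm_def
  have hfm : f m = 0 := Nat.find_spec hex
  have hposm : ∀ i, i < m → 1 ≤ f i := by
    intro i hi
    have := Nat.find_min hex hi
    omega
  have hz : ∀ i, m ≤ i → f i = 0 := fun i hi => Nat.le_zero.mp (le_of_le_of_eq (hant hi) hfm)
  have hmn : m ≤ n := Nat.find_le (hn n le_rfl)
  have hm1 : 1 ≤ m := by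
    rcases Nat.eq_zero_or_pos m with h0 | h
    · exfalso
      apply hpos
      apply Finset.sum_eq_zero
      intro i _
      exact hz i (by omega)
    · exact h
  set c := f 0 with hc_def
  have hc1 : 1 ≤ c := hposm 0 (by omega)
  -- c ≤ m - 1  via EG at k = 1
  have hcm : c + 1 ≤ m := by
    have h1 := heg 1 le_rfl (by omega)
    rw [show (1:ℕ) * (1-1) = 0 by norm_num] at h1
    have hsplit := sum_split (fun i => min (f i) 1) (show 1 ≤ m from hm1) (show m ≤ n from hmn)
    have e1 : ∑ i ∈ Ico 1 m, min (f i) 1 = (m - 1) * 1 := by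
      rw [← Nat.card_Ico 1 m, ← smul_eq_mul, ← sum_const]
      refine sum_congr rfl fun i hi => ?_
      rw [mem_Ico] at hi
      have := hposm i hi.2
      omega
    have e2 : ∑ i ∈ Ico m n, min (f i) 1 = 0 := by
      refine Finset.sum_eq_zero fun i hi => ?_
      rw [mem_Ico] at hi
      rw [hz i hi.1]
      simp
    simp only [range_one, sum_singleton] at h1
    rw [hsplit, e1, e2] at h1
    omega
  have hm2 : 2 ≤ m := by omega
  -- the descent index
  have hdesc : ∃ i, f i < c := ⟨m, by omega⟩
  set t := Nat.find hdesc with ht_def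
  have hft : f t < c := Nat.find_spec hdesc
  have htconst : ∀ i, i < t → f i = c := by
    intro i hi
    have h1 := Nat.find_min hdesc hi
    have h2 : f i ≤ c := hant (Nat.zero_le i)
    omega
  have ht1 : 1 ≤ t := by
    by_contra h
    push_neg at h
    interval_cases t
    · exact absurd hft (by omega)
  set a := min (t - 1) (m - 2) with ha_def
  set b := m - 1 with hb_def
  have hab : a < b := by omega
  have hbn : b < n := by omega
  have hfa_eq : ∀ i, i ≤ a → f i = c := fun i hi => htconst i (by omega)
  have hfa1 : 1 ≤ f a := hposm a (by omega)
  have hfb1 : 1 ≤ f b := hposm b (by omega)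
  have hfab : f a ≤ b := by
    rw [hfa_eq a le_rfl]
    omega
  have hblock : a + 1 ≤ m - 2 → f (a + 1) < c := by
    intro h
    have : a = t - 1 := by omega
    have : a + 1 = t := by omega
    rw [this]
    exact hft
  -- the reduced function
  set f' : ℕ → ℕ := fun i => if i = a ∨ i = b then f i - 1 else f i with hf'_def
  have hf' : ∀ i, f' i = if i = a ∨ i = b then f i - 1 else f i := fun i => rfl
  have hf'le : ∀ i, f' i ≤ f i := by
    intro i
    rw [hf']
    split_ifs <;> omega
  have hf'a : f' a = c - 1 := by
    rw [hf', if_pos (Or.inl rfl), hfa_eq a le_rfl]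
  have hf'b : f' b = f b - 1 := by
    rw [hf', if_pos (Or.inr rfl)]
  have hf'other : ∀ i, i ≠ a → i ≠ b → f' i = f i := by
    intro i h1 h2
    rw [hf', if_neg (by tauto)]
  -- antitone
  have hant' : Antitone f' := by
    apply antitone_nat_of_succ_le
    intro i
    rcases eq_or_ne i a with rfl | hia
    · rcases eq_or_ne (a + 1) b with he | hne
      · rw [he, hf'a, hf'b]
        have : f b ≤ c := hant (Nat.zero_le b)
        omega
      · rw [hf'a, hf'other (a+1) (by omega) hne]
        have h2 : a + 1 ≤ m - 2 := by omega
        have := hblock h2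
        omega
    · rcases eq_or_ne i b with rfl | hib
      · have : f' (b + 1) = f (b + 1) := hf'other _ (by omega) (by omega)
        rw [this, hz (b+1) (by omega)]
        omega
      · have hi' : f' i = f i := hf'other i hia hib
        rcases eq_or_ne (i + 1) a with he | hnea
        · rw [hi', hf', if_pos (Or.inl he)]
          have := hant (show i ≤ i + 1 by omega)
          omega
        · rcases eq_or_ne (i + 1) b with he | hneb
          · rw [hi', hf', if_pos (Or.inr he)]
            have := hant (show i ≤ i + 1 by omega)
            omega
          · rw [hi', hf'other _ hnea hneb]
            exact hant (by omega)
  have hn' : ∀ i, n ≤ i → f' i = 0 := by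
    intro i hi
    rw [hf'other i (by omega) (by omega), hn i hi]
  -- sum
  have hsum : ∑ i ∈ range n, f i = (∑ i ∈ range n, f' i) + 2 := by
    refine sum_dec_two (range n) (by omega) ?_ ?_ hf' hfa1 hfb1 <;>
      (rw [mem_range]; omega)
  refine ⟨a, b, f', hab, hbn, hfa1, hfb1, hfab, hf', hant', hn', by omega, ?_⟩
  -- the Erdos-Gallai condition for f'
  intro k hk1 hkn
  by_cases hkm : m ≤ k
  · -- case (a)
    have hT : ∀ i ∈ Ico k n, min (f' i) k = min (f i) k := by
      intro i hi
      rw [mem_Ico] at hi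
      have e1 : f i = 0 := hz i (by omega)
      have e2 : f' i ≤ f i := hf'le i
      omega
    calc ∑ i ∈ range k, f' i ≤ ∑ i ∈ range k, f i := sum_le_sum fun i _ => hf'le i
      _ ≤ k * (k - 1) + ∑ i ∈ Ico k n, min (f i) k := heg k hk1 hkn
      _ = k * (k - 1) + ∑ i ∈ Ico k n, min (f' i) k := by
          rw [sum_congr rfl hT]
  · push_neg at hkm
    by_cases hak : a < k
    · -- case (b) : a < k < m
      have hS : ∑ i ∈ range k, f i = (∑ i ∈ range k, f' i) + 1 := by
        refine sum_dec_one (range k) ?_ ?_ hf' hfa1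
        · rw [mem_range]; omega
        · rw [mem_range]; omega
      by_cases hfb : f b ≤ k
      · have hT : ∑ i ∈ Ico k n, min (f i) k = (∑ i ∈ Ico k n, min (f' i) k) + 1 := by
          have key : ∀ i ∈ Ico k n, min (f i) k
              = min (f' i) k + (if i = b then 1 else 0) := by
            intro i hi
            rw [mem_Ico] at hi
            rcases eq_or_ne i b with rfl | hib
            · rw [hf'b, if_pos rfl]
              omega
            · rw [hf'other i (by omega) hib, if_neg hib]
              omega
          rw [sum_congr rfl key, sum_add_distrib, sum_ite_eq' _ b fun _ => 1,
            if_pos (by rw [mem_Ico]; omega)]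
        have := heg k hk1 hkn
        omega
      · push_neg at hfb
        have hT : ∑ i ∈ Ico k n, min (f i) k = ∑ i ∈ Ico k n, min (f' i) k := by
          refine sum_congr rfl fun i hi => ?_
          rw [mem_Ico] at hi
          rcases eq_or_ne i b with rfl | hib
          · rw [hf'b]
            omega
          · rw [hf'other i (by omega) hib]
        have := heg k hk1 hkn
        omega
    · push_neg at hak
      -- case (c) : k ≤ a
      have hSf : ∑ i ∈ range k, f i = k * c := by
        have e : ∀ i ∈ range k, f i = c := fun i hi => hfa_eq i (by rw [mem_range] at hi; omega)
        rw [sum_congr rfl e, sum_const, card_range, smul_eq_mul]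
      have hS : ∑ i ∈ range k, f' i = k * c := by
        rw [← hSf]
        refine sum_eq_of_ne (range k) ?_ ?_ hf' <;> (rw [mem_range]; omega)
      by_cases hfbk : k + 1 ≤ f b
      · -- case (c1)
        have hT : ∑ i ∈ Ico k n, min (f' i) k = (m - k) * k := by
          rw [sum_split _ (show k ≤ m by omega) hmn]
          have e1 : ∑ i ∈ Ico k m, min (f' i) k = (m - k) * k := by
            rw [← Nat.card_Ico k m, ← smul_eq_mul, ← sum_const]
            refine sum_congr rfl fun i hi => ?_
            rw [mem_Ico] at hi
            have h1 : f b ≤ f i := hant (by omega)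
            have h2 : f i - 1 ≤ f' i := by rw [hf']; split_ifs <;> omega
            omega
          have e2 : ∑ i ∈ Ico m n, min (f' i) k = 0 := by
            refine Finset.sum_eq_zero fun i hi => ?_
            rw [mem_Ico] at hi
            have e : f i = 0 := hz i hi.1
            have := hf'le i
            omega
          rw [e1, e2, add_zero]
        rw [hS, hT]
        have hkey : k * c ≤ k * (k - 1) + k * (m - k) := by
          calc k * c ≤ k * (m - 1) := Nat.mul_le_mul_left k (by omega)
            _ = k * ((k - 1) + (m - k)) := by congr 1; omega
            _ = k * (k - 1) + k * (m - k) := Nat.mul_add k _ _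
        rw [Nat.mul_comm (m - k) k]
        exact hkey
      · push_neg at hfbk
        -- f b ≤ k
        have hrex : ∃ i, f i ≤ k := ⟨b, by omega⟩
        set r := Nat.find hrex with hr_def
        have hfr : f r ≤ k := Nat.find_spec hrex
        have hrmin : ∀ i, i < r → k + 1 ≤ f i := by
          intro i hi
          have := Nat.find_min hrex hi
          omega
        have hrb : r ≤ b := Nat.find_le (by omega)
        by_cases hck : k + 1 ≤ c
        · -- case (c2)
          have hkr : k < r := by
            by_contra h
            push_neg at h
            have h1 : f k ≤ f r := hant h
            have h2 : f k = c := hfa_eq k hak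
            omega
          have har : a < r := by
            by_contra h
            push_neg at h
            have h1 : f r = c := hfa_eq r h
            omega
          set Sstar := ∑ i ∈ Ico r m, f i with hSstar_def
          have hSstar_ge : m - r ≤ Sstar := by
            calc m - r = ∑ i ∈ Ico r m, 1 := by rw [sum_const, Nat.card_Ico, smul_eq_mul, mul_one]
              _ ≤ Sstar := sum_le_sum fun i hi => hposm i (by rw [mem_Ico] at hi; omega)
          have hT : ∑ i ∈ Ico k n, min (f' i) k = (r - k) * k + (Sstar - 1) := by
            rw [sum_split _ (show k ≤ r by omega) (show r ≤ n by omega),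
              sum_split _ (show r ≤ m by omega) hmn]
            have e1 : ∑ i ∈ Ico k r, min (f' i) k = (r - k) * k := by
              rw [← Nat.card_Ico k r, ← smul_eq_mul, ← sum_const]
              refine sum_congr rfl fun i hi => ?_
              rw [mem_Ico] at hi
              have h1 := hrmin i hi.2
              have h2 : f i - 1 ≤ f' i := by rw [hf']; split_ifs <;> omega
              omega
            have e2 : ∑ i ∈ Ico r m, min (f' i) k = Sstar - 1 := by
              have key : ∀ i ∈ Ico r m, min (f' i) k = f' i := by
                intro i hi
                rw [mem_Ico] at hi
                have h1 : f i ≤ f r := hant hi.1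
                have h2 := hf'le i
                omega
              rw [sum_congr rfl key]
              have : Sstar = (∑ i ∈ Ico r m, f' i) + 1 := by
                refine sum_dec_one (Ico r m) ?_ ?_ (fun i => (hf' i).trans (if_congr or_comm rfl rfl)) hfb1
                · rw [mem_Ico]; omega
                · rw [mem_Ico]; push_neg; intro h; omega
              rw [this, Nat.add_sub_cancel]
            have e3 : ∑ i ∈ Ico m n, min (f' i) k = 0 := by
              refine Finset.sum_eq_zero fun i hi => ?_
              rw [mem_Ico] at hi
              have e : f i = 0 := hz i hi.1
              have := hf'le i
              omega
            rw [e1, e2, e3, add_zero]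
          rw [hS, hT]
          -- use EG at k+1
          have hk1n : k + 1 ≤ n := by omega
          have hS1 : ∑ i ∈ range (k+1), f i = (k+1) * c := by
            have e : ∀ i ∈ range (k+1), f i = c := fun i hi =>
              hfa_eq i (by rw [mem_range] at hi; omega)
            rw [sum_congr rfl e, sum_const, card_range, smul_eq_mul]
          have hT1 : ∑ i ∈ Ico (k+1) n, min (f i) (k+1) = (r - (k+1)) * (k+1) + Sstar := by
            rw [sum_split _ (show k+1 ≤ r by omega) (show r ≤ n by omega),
              sum_split _ (show r ≤ m by omega) hmn]
            have e1 : ∑ i ∈ Ico (k+1) r, min (f i) (k+1) = (r - (k+1)) * (k+1) := by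
              rw [← Nat.card_Ico (k+1) r, ← smul_eq_mul, ← sum_const]
              refine sum_congr rfl fun i hi => ?_
              rw [mem_Ico] at hi
              have := hrmin i hi.2
              omega
            have e2 : ∑ i ∈ Ico r m, min (f i) (k+1) = Sstar := by
              refine sum_congr rfl fun i hi => ?_
              rw [mem_Ico] at hi
              have : f i ≤ f r := hant hi.1
              omega
            have e3 : ∑ i ∈ Ico m n, min (f i) (k+1) = 0 := by
              refine Finset.sum_eq_zero fun i hi => ?_
              rw [mem_Ico] at hi
              rw [hz i hi.1]
              simp
            rw [e1, e2, e3, add_zero]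
          have hkey := heg (k+1) (by omega) hk1n
          rw [hS1, hT1] at hkey
          simp only [Nat.add_sub_cancel] at hkey
          -- now pure arithmetic
          have e6 : k * (k - 1) + (r - k) * k = k * (r - 1) := by
            rw [Nat.mul_comm (r - k) k, ← Nat.mul_add]
            congr 1
            omega
          have e1 : (k+1) * k + ((r - (k+1)) * (k+1) + Sstar) = (k+1) * (r-1) + Sstar := by
            rw [Nat.mul_comm (r - (k+1)) (k+1), ← Nat.add_assoc, ← Nat.mul_add]
            congr 2
            omega
          rw [e1] at hkey
          rcases le_or_gt c (r - 1) with hcr | hcr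
          · have h1 : k * c ≤ k * (r - 1) := Nat.mul_le_mul_left k hcr
            omega
          · have e2 : (k+1) * c = (k+1) * (r-1) + (k+1) * (c - r + 1) := by
              rw [← Nat.mul_add]
              congr 1
              omega
            have e3 : k * c = k * (r - 1) + k * (c - r + 1) := by
              rw [← Nat.mul_add]
              congr 1
              omega
            have e4 : k * (c - r + 1) + (c - r + 1) = (k+1) * (c - r + 1) := by ring
            have e5 : 1 ≤ c - r + 1 := by omega
            omega
        · -- case (c3) : c ≤ k
          push_neg at hck
          set Shat := ∑ i ∈ Ico k m, f i with hShat_def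
          have hfik : ∀ i, f i ≤ k := fun i => le_trans (hant (Nat.zero_le i)) (by omega)
          have hT : ∑ i ∈ Ico k n, min (f' i) k = Shat - 2 := by
            rw [sum_split _ (show k ≤ m by omega) hmn]
            have e2 : ∑ i ∈ Ico m n, min (f' i) k = 0 := by
              refine Finset.sum_eq_zero fun i hi => ?_
              rw [mem_Ico] at hi
              have e : f i = 0 := hz i hi.1
              have := hf'le i
              omega
            have e1 : ∑ i ∈ Ico k m, min (f' i) k = Shat - 2 := by
              have key : ∀ i ∈ Ico k m, min (f' i) k = f' i := by
                intro i _
                have := hf'le i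
                have := hfik i
                omega
              rw [sum_congr rfl key]
              have : Shat = (∑ i ∈ Ico k m, f' i) + 2 := by
                refine sum_dec_two (Ico k m) (by omega) ?_ ?_ hf' hfa1 hfb1 <;>
                  (rw [mem_Ico]; omega)
              rw [this, Nat.add_sub_cancel]
            rw [e1, e2, add_zero]
          rw [hS, hT]
          -- Shat ≥ c + 1
          have hShatc : c + 1 ≤ Shat := by
            have h1 : Shat = f k + ∑ i ∈ Ico (k+1) m, f i := by
              rw [hShat_def, sum_split _ (show k ≤ k + 1 by omega) (show k + 1 ≤ m by omega)]
              congr 1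
              rw [Nat.Ico_succ_singleton, sum_singleton]
            have h2 : f k = c := hfa_eq k hak
            have h3 : m - (k+1) ≤ ∑ i ∈ Ico (k+1) m, f i := by
              calc m - (k+1) = ∑ i ∈ Ico (k+1) m, 1 := by
                    rw [sum_const, Nat.card_Ico, smul_eq_mul, mul_one]
                _ ≤ _ := sum_le_sum fun i hi => hposm i (by rw [mem_Ico] at hi; omega)
            omega
          -- step 1 : k*c + 1 ≤ k*(k-1) + Shat
          have hstep1 : k * c + 1 ≤ k * (k - 1) + Shat := by
            have h1 : c * (k - 1) ≤ k * (k - 1) := Nat.mul_le_mul_right (k-1) (by omega)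
            have h2 : c * (k - 1) + c = c * k := by
              rw [← Nat.mul_succ]
              congr 1
              omega
            have h3 : c * k = k * c := Nat.mul_comm c k
            omega
          -- parity
          have hEq : ∑ i ∈ range n, f i = k * c + Shat := by
            rw [range_eq_Ico, sum_split f (Nat.zero_le k) (show k ≤ n by omega),
              sum_split f (show k ≤ m by omega) hmn]
            have h0 : ∑ i ∈ Ico 0 k, f i = k * c := by rw [← range_eq_Ico]; exact hSf
            have h2 : ∑ i ∈ Ico m n, f i = 0 :=
              Finset.sum_eq_zero fun i hi => hz i (by rw [mem_Ico] at hi; omega)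
            rw [h0, h2, add_zero]
          have hQ : Even (k * (k - 1)) := by
            have := Nat.even_mul_succ_self (k - 1)
            have e : (k - 1) + 1 = k := by omega
            rw [e] at this
            rwa [Nat.mul_comm]
          obtain ⟨x, hx⟩ := heven
          obtain ⟨y, hy⟩ := hQ
          rw [hEq] at hx
          -- conclude with parity
          omega

section Realize

lemma card_filter_le {n b : ℕ} (hb : b < n) :
    (univ.filter fun i : Fin n => i.1 ≤ b).card = b + 1 := by
  rw [Finset.card_filter]
  rw [Fin.sum_univ_eq_sum_range (fun j => if j ≤ b then 1 else 0)]
  rw [← Finset.card_filter]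
  have : (range n).filter (fun j => j ≤ b) = range (b + 1) := by
    ext j
    simp only [mem_filter, mem_range]
    omega
  rw [this, card_range]

lemma realize (s : ℕ) : ∀ (n : ℕ) (f : ℕ → ℕ), Antitone f → (∀ i, n ≤ i → f i = 0) →
    ∑ i ∈ range n, f i = s → Even s → egf f n →
    ∃ (G : SimpleGraph (Fin n)) (_ : DecidableRel G.Adj), ∀ i : Fin n, G.degree i = f i.1 := by
  induction s using Nat.strong_induction_on with
  | _ s IH =>
    intro n f hant hn hsum heven heg
    by_cases h0 : ∑ i ∈ range n, f i = 0
    · refine ⟨⊥, by infer_instance, fun i => ?_⟩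
      rw [SimpleGraph.bot_degree]
      have := (Finset.sum_eq_zero_iff.mp h0) i.1 (mem_range.mpr i.isLt)
      omega
    · obtain ⟨a, b, f', hab, hbn, hfa1, hfb1, hfab, hf', hant', hn', hsum2, heg'⟩ :=
        step hant hn (by rw [hsum]; exact heven) heg h0
      have hs2 : s ≥ 2 := by omega
      have hev2 : Even (s - 2) := by
        obtain ⟨w, hw⟩ := heven
        exact ⟨w - 1, by omega⟩
      obtain ⟨G, dec, hdeg⟩ := IH (s - 2) (by omega) n f' hant' hn' (by omega) hev2 heg'
      set aF : Fin n := ⟨a, by omega⟩ with haF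
      set bF : Fin n := ⟨b, hbn⟩ with hbF
      have haFbF : aF ≠ bF := by
        simp only [haF, hbF, ne_eq, Fin.mk.injEq]
        omega
      have hf'a : f' a = f a - 1 := by rw [hf' a, if_pos (Or.inl rfl)]
      have hf'b : f' b = f b - 1 := by rw [hf' b, if_pos (Or.inr rfl)]
      suffices hH : ∃ (H : SimpleGraph (Fin n)) (_ : DecidableRel H.Adj),
          (∀ i, H.degree i = f' i.1) ∧ ¬ H.Adj aF bF by
        obtain ⟨H, dH, hHdeg, hHnadj⟩ := hH
        letI := dH
        refine ⟨addE H aF bF haFbF, inferInstance, fun i => ?_⟩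
        rw [addE_degree H haFbF hHnadj i, hHdeg i, hf' i.1]
        by_cases hv : i.1 = a ∨ i.1 = b
        · have hv2 : i = aF ∨ i = bF := by
            rcases hv with h | h
            · exact Or.inl (Fin.ext h)
            · exact Or.inr (Fin.ext h)
          rw [if_pos hv, if_pos hv2]
          rcases hv with h | h <;> rw [h] <;> omega
        · have hv2 : ¬ (i = aF ∨ i = bF) := by
            rintro (rfl | rfl)
            · exact hv (Or.inl rfl)
            · exact hv (Or.inr rfl)
          rw [if_neg hv, if_neg hv2]
          omega
      by_cases hadj : G.Adj aF bF
      · set A : Finset (Fin n) := insert aF (G.neighborFinset aF) with hA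
        set B : Finset (Fin n) := insert bF (G.neighborFinset bF) with hB
        by_cases hsw : ∃ u v, u ∉ A ∧ G.Adj u v ∧ v ∉ B
        · obtain ⟨u, v, hu, huv, hv⟩ := hsw
          have hu' : u ≠ aF ∧ ¬ G.Adj aF u := by
            rw [hA, mem_insert, SimpleGraph.mem_neighborFinset] at hu
            push_neg at hu
            exact hu
          have hv' : v ≠ bF ∧ ¬ G.Adj bF v := by
            rw [hB, mem_insert, SimpleGraph.mem_neighborFinset] at hv
            push_neg at hv
            exact hv
          have nau : aF ≠ u := Ne.symm hu'.1
          have nbv : bF ≠ v := Ne.symm hv'.1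
          have nab : aF ≠ bF := haFbF
          have nbu : bF ≠ u := fun h => hv'.2 (h ▸ huv)
          have nav : aF ≠ v := fun h => hu'.2 (G.adj_symm (h ▸ huv))
          refine ⟨switchE G aF bF u v nau nbv, inferInstance, fun i => ?_, ?_⟩
          · rw [switchE_degree G hadj huv hu'.2 hv'.2 nau nbv i, hdeg i]
          · exact switchE_not_adj G nau nbv nab nbu nav
        · exfalso
          push_neg at hsw
          have hcardA : A.card ≤ f a := by
            have h1 : A.card ≤ G.degree aF + 1 := by
              rw [SimpleGraph.degree]
              exact Finset.card_insert_le _ _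
            rw [hdeg aF, hf'a] at h1
            omega
          have hcf : (univ.filter fun i : Fin n => i.1 ≤ b).card = b + 1 := card_filter_le hbn
          have hsubA : ¬ (univ.filter fun i : Fin n => i.1 ≤ b) ⊆ A := fun hsub => by
            have := Finset.card_le_card hsub
            omega
          obtain ⟨u, hu1, huA⟩ := Finset.not_subset.mp hsubA
          have hub : u.1 ≤ b := (mem_filter.mp hu1).2
          have hadju : ∀ v, G.Adj u v → v ∈ B := fun v hv => hsw u v huA hv
          have hbFA : bF ∈ A := by
            rw [hA, mem_insert, SimpleGraph.mem_neighborFinset]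
            exact Or.inr hadj
          have hdu : G.degree u ≤ G.degree bF := by
            by_cases huB : u ∈ B
            · have hsub : G.neighborFinset u ⊆ B.erase u := by
                intro v hv
                rw [SimpleGraph.mem_neighborFinset] at hv
                rw [mem_erase]
                exact ⟨(G.ne_of_adj hv).symm, hadju v hv⟩
              have h1 := Finset.card_le_card hsub
              rw [Finset.card_erase_of_mem huB] at h1
              have h2 : B.card ≤ G.degree bF + 1 := card_insert_le _ _
              rw [SimpleGraph.degree]
              omega
            · have hsub : G.neighborFinset u ⊆ G.neighborFinset bF := by
                intro v hv
                rw [SimpleGraph.mem_neighborFinset] at hv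
                have hvB := hadju v hv
                rw [hB, mem_insert] at hvB
                rcases hvB with rfl | h
                · exfalso
                  apply huB
                  rw [hB, mem_insert, SimpleGraph.mem_neighborFinset]
                  exact Or.inr (G.adj_symm hv)
                · exact h
              rw [SimpleGraph.degree, SimpleGraph.degree]
              exact Finset.card_le_card hsub
          have h1 : G.degree u = f u.1 := by
            rw [hdeg u, hf' u.1]
            have hua : u ≠ aF := fun h => huA (h ▸ mem_insert_self _ _)
            have hub' : u ≠ bF := fun h => huA (h ▸ hbFA)
            have e1 : u.1 ≠ a := fun h => hua (Fin.ext h)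
            have e2 : u.1 ≠ b := fun h => hub' (Fin.ext h)
            rw [if_neg (by tauto)]
          have h2 : G.degree bF = f b - 1 := by rw [hdeg bF, hf'b]
          have h3 : f b ≤ f u.1 := hant hub
          omega
      · exact ⟨G, dec, hdeg, hadj⟩

end Realize

section Main

lemma card_filter_lt {n k : ℕ} (hk : k ≤ n) :
    (univ.filter fun i : Fin n => (i : ℕ) < k).card = k := by
  rw [Finset.card_filter]
  rw [Fin.sum_univ_eq_sum_range (fun j => if j < k then 1 else 0)]
  rw [← Finset.card_filter]
  have : (range n).filter (fun j => j < k) = range k := by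
    ext j
    simp only [mem_filter, mem_range]
    omega
  rw [this, card_range]

lemma graphic_to_eg {n : ℕ} (D : Fin n → ℕ) (G : SimpleGraph (Fin n)) [DecidableRel G.Adj]
    (hdeg : ∀ i, G.degree i = D i) :
    Even (∑ i, D i) ∧
      ∀ k : ℕ, 1 ≤ k → k ≤ n →
        ∑ i ∈ Finset.univ.filter (fun i : Fin n => (i : ℕ) < k), D i ≤
          k * (k - 1) + ∑ i ∈ Finset.univ.filter (fun i : Fin n => k ≤ (i : ℕ)), min (D i) k := by
  classical
  constructor
  · have h1 : ∑ i, D i = ∑ i, G.degree i := by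
      refine sum_congr rfl fun i _ => (hdeg i).symm
    rw [h1, SimpleGraph.sum_degrees_eq_twice_card_edges]
    exact even_two_mul _
  · intro k hk1 hkn
    set K : Finset (Fin n) := univ.filter fun i : Fin n => (i : ℕ) < k with hK
    set Kc : Finset (Fin n) := univ.filter fun i : Fin n => k ≤ (i : ℕ) with hKc
    have hKcard : K.card = k := card_filter_lt hkn
    have hDdeg : ∑ i ∈ K, D i = ∑ i ∈ K, G.degree i :=
      sum_congr rfl fun i _ => (hdeg i).symm
    have hsplit : ∀ i, G.degree i =
        ((G.neighborFinset i).filter fun j : Fin n => (j : ℕ) < k).card +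
        ((G.neighborFinset i).filter fun j : Fin n => ¬ (j : ℕ) < k).card := by
      intro i
      rw [SimpleGraph.degree]
      exact (card_filter_add_card_filter_not (fun j : Fin n => (j : ℕ) < k)).symm
    have hA : ∀ i ∈ K, ((G.neighborFinset i).filter fun j : Fin n => (j : ℕ) < k).card ≤ k - 1 := by
      intro i hi
      have hsub : (G.neighborFinset i).filter (fun j : Fin n => (j : ℕ) < k) ⊆ K.erase i := by
        intro j hj
        rw [mem_filter, SimpleGraph.mem_neighborFinset] at hj
        rw [mem_erase, hK, mem_filter]
        exact ⟨(G.ne_of_adj hj.1).symm, ⟨mem_univ j, hj.2⟩⟩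
      calc ((G.neighborFinset i).filter fun j : Fin n => (j : ℕ) < k).card
          ≤ (K.erase i).card := card_le_card hsub
        _ = k - 1 := by rw [card_erase_of_mem hi, hKcard]
    have hB0 : ∀ i, ((G.neighborFinset i).filter fun j : Fin n => ¬ (j : ℕ) < k)
        = Kc.filter (fun j => G.Adj i j) := by
      intro i
      ext j
      rw [mem_filter, SimpleGraph.mem_neighborFinset, mem_filter, hKc, mem_filter]
      constructor
      · rintro ⟨h1, h2⟩
        exact ⟨⟨mem_univ j, by omega⟩, h1⟩
      · rintro ⟨⟨-, h1⟩, h2⟩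
        exact ⟨h2, by omega⟩
    have hB : ∑ i ∈ K, (Kc.filter (fun j => G.Adj i j)).card
        ≤ ∑ j ∈ Kc, min (D j) k := by
      have e1 : ∀ i ∈ K, (Kc.filter (fun j => G.Adj i j)).card
          = ∑ j ∈ Kc, if G.Adj i j then 1 else 0 := by
        intro i _
        rw [Finset.card_filter]
      rw [sum_congr rfl e1, Finset.sum_comm]
      refine sum_le_sum fun j hj => ?_
      have e2 : ∑ i ∈ K, (if G.Adj i j then 1 else 0)
          = (K.filter (fun i => G.Adj i j)).card := by
        rw [Finset.card_filter]
      rw [e2]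
      refine le_min ?_ ?_
      · have hsub : K.filter (fun i => G.Adj i j) ⊆ G.neighborFinset j := by
          intro i hi
          rw [mem_filter] at hi
          rw [SimpleGraph.mem_neighborFinset]
          exact G.adj_symm hi.2
        calc (K.filter (fun i => G.Adj i j)).card
            ≤ (G.neighborFinset j).card := card_le_card hsub
          _ = D j := hdeg j
      · calc (K.filter (fun i => G.Adj i j)).card
            ≤ K.card := card_le_card (filter_subset _ _)
          _ = k := hKcard
    calc ∑ i ∈ K, D i = ∑ i ∈ K, G.degree i := hDdeg
      _ = ∑ i ∈ K, (((G.neighborFinset i).filter fun j : Fin n => (j : ℕ) < k).card +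
            ((G.neighborFinset i).filter fun j : Fin n => ¬ (j : ℕ) < k).card) :=
          sum_congr rfl fun i _ => hsplit i
      _ = (∑ i ∈ K, ((G.neighborFinset i).filter fun j : Fin n => (j : ℕ) < k).card) +
          ∑ i ∈ K, ((G.neighborFinset i).filter fun j : Fin n => ¬ (j : ℕ) < k).card :=
          sum_add_distrib
      _ ≤ k * (k - 1) + ∑ j ∈ Kc, min (D j) k := by
          have t1 : (∑ i ∈ K, ((G.neighborFinset i).filter fun j : Fin n => (j : ℕ) < k).card)
              ≤ k * (k - 1) := by
            calc (∑ i ∈ K, ((G.neighborFinset i).filter fun j : Fin n => (j : ℕ) < k).card)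
                ≤ ∑ _i ∈ K, (k - 1) := sum_le_sum hA
              _ = k * (k - 1) := by rw [sum_const, hKcard, smul_eq_mul]
          have t2 : ∑ i ∈ K, ((G.neighborFinset i).filter fun j : Fin n => ¬ (j : ℕ) < k).card
              ≤ ∑ j ∈ Kc, min (D j) k := by
            calc ∑ i ∈ K, ((G.neighborFinset i).filter fun j : Fin n => ¬ (j : ℕ) < k).card
                = ∑ i ∈ K, (Kc.filter (fun j => G.Adj i j)).card :=
                  sum_congr rfl fun i _ => by rw [hB0 i]
              _ ≤ ∑ j ∈ Kc, min (D j) k := hB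
          omega

lemma eg_to_graphic {n : ℕ} (D : Fin n → ℕ)
    (hmono : ∀ j k : Fin n, j ≤ k → D k ≤ D j)
    (heven : Even (∑ i, D i))
    (heg : ∀ k : ℕ, 1 ≤ k → k ≤ n →
      ∑ i ∈ Finset.univ.filter (fun i : Fin n => (i : ℕ) < k), D i ≤
        k * (k - 1) + ∑ i ∈ Finset.univ.filter (fun i : Fin n => k ≤ (i : ℕ)), min (D i) k) :
    ∃ (G : SimpleGraph (Fin n)) (_ : DecidableRel G.Adj), ∀ i, G.degree i = D i := by
  classical
  set f : ℕ → ℕ := fun j => if h : j < n then D ⟨j, h⟩ else 0 with hf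
  have hfD : ∀ i : Fin n, f i.1 = D i := by
    intro i
    rw [hf]
    simp only [i.isLt, dif_pos]
  have hant : Antitone f := by
    intro x y hxy
    rw [hf]
    simp only
    by_cases hy : y < n
    · have hx : x < n := lt_of_le_of_lt hxy hy
      rw [dif_pos hy, dif_pos hx]
      exact hmono ⟨x, hx⟩ ⟨y, hy⟩ hxy
    · rw [dif_neg hy]
      omega
  have hnz : ∀ i, n ≤ i → f i = 0 := by
    intro i hi
    rw [hf]
    simp only
    rw [dif_neg (by omega)]
  have hsum : ∑ i ∈ range n, f i = ∑ i, D i := by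
    rw [← Fin.sum_univ_eq_sum_range (fun j => f j) n]
    exact sum_congr rfl fun i _ => hfD i
  have hpre : ∀ k, k ≤ n →
      ∑ i ∈ Finset.univ.filter (fun i : Fin n => (i : ℕ) < k), D i = ∑ i ∈ range k, f i := by
    intro k hkn
    rw [sum_filter]
    have e1 : ∀ i : Fin n, (if (i : ℕ) < k then D i else 0) = if (i : ℕ) < k then f i.1 else 0 := by
      intro i
      rw [hfD]
    rw [sum_congr rfl fun i _ => e1 i,
      Fin.sum_univ_eq_sum_range (fun j => if j < k then f j else 0) n, ← sum_filter]
    have e2 : (range n).filter (fun j => j < k) = range k := by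
      ext j
      simp only [mem_filter, mem_range]
      omega
    rw [e2]
  have htail : ∀ k, k ≤ n →
      ∑ i ∈ Finset.univ.filter (fun i : Fin n => k ≤ (i : ℕ)), min (D i) k
        = ∑ i ∈ Ico k n, min (f i) k := by
    intro k hkn
    rw [sum_filter]
    have e1 : ∀ i : Fin n, (if k ≤ (i : ℕ) then min (D i) k else 0)
        = if k ≤ (i : ℕ) then min (f i.1) k else 0 := by
      intro i
      rw [hfD]
    rw [sum_congr rfl fun i _ => e1 i,
      Fin.sum_univ_eq_sum_range (fun j => if k ≤ j then min (f j) k else 0) n, ← sum_filter]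
    have e2 : (range n).filter (fun j => k ≤ j) = Ico k n := by
      ext j
      simp only [mem_filter, mem_range, mem_Ico]
      omega
    rw [e2]
  have hegf : egf f n := by
    intro k hk1 hkn
    have := heg k hk1 hkn
    rw [hpre k hkn, htail k hkn] at this
    exact this
  obtain ⟨G, dec, hdeg⟩ := realize (∑ i ∈ range n, f i) n f hant hnz rfl
    (by rw [hsum]; exact heven) hegf
  exact ⟨G, dec, fun i => (hdeg i).trans (hfD i)⟩

end Main

end EG16

theorem stmt_16 {n : ℕ} (D : Fin n → ℕ)
    (hmono : ∀ j k : Fin n, j ≤ k → D k ≤ D j) :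
    IsGraphic D ↔
      (Even (∑ i, D i) ∧
       ∀ k : ℕ, 1 ≤ k → k ≤ n →
         ∑ i ∈ Finset.univ.filter (fun i : Fin n => (i : ℕ) < k), D i ≤
           k * (k - 1) +
             ∑ i ∈ Finset.univ.filter (fun i : Fin n => k ≤ (i : ℕ)), min (D i) k) := by
  constructor
  · rintro ⟨G, dec, hdeg⟩
    exact @EG16.graphic_to_eg n D G dec hdeg
  · rintro ⟨heven, heg⟩
    exact EG16.eg_to_graphic D hmono heven heg
end

section
/- Let A = (a_1,...,a_p) be a sequence of nonnegative integers and M = max_i a_i. Then there exists an integer n with max(p, M) ≤ n ≤ p + M and nonnegative integers d_{p+1},...,d_n such that (a_1,...,a_p,d_{p+1},...,d_n) is graphic. In particular, every sequence admits a graphic extension of length at most p + M, realized e.g. by a bipartite graph in which vertex x_i is joined to y_1,...,y_{a_i}. -/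
open Finset

theorem stmt_17 {p : ℕ} (A : Fin p → ℕ) :
    ∃ (n : ℕ) (hpn : p ≤ n),
      max p (Finset.univ.sup A) ≤ n ∧ n ≤ p + Finset.univ.sup A ∧
      ∃ D : Fin n → ℕ, IsGraphic D ∧ ∀ i : Fin p, D (Fin.castLE hpn i) = A i := by
  classical
  set M := Finset.univ.sup A with hM
  refine ⟨p + M, Nat.le_add_right _ _,
    max_le (Nat.le_add_right _ _) (Nat.le_add_left _ _), le_refl _, ?_⟩
  set n := p + M with hn
  let f : ℕ → ℕ := fun k => if h : k < p then A ⟨k, h⟩ else 0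
  let r : Fin n → Fin n → Prop := fun u v => p ≤ v.val ∧ v.val < p + f u.val
  let G := SimpleGraph.fromRel r
  haveI hdec : DecidableRel G.Adj := fun u v => by
    show Decidable (u ≠ v ∧ (r u v ∨ r v u))
    unfold r
    infer_instance
  refine ⟨fun v => G.degree v, ⟨G, hdec, fun _ => rfl⟩, fun i => ?_⟩
  have hAi : A i ≤ M := Finset.le_sup (Finset.mem_univ i)
  have hu : (Fin.castLE (Nat.le_add_right p M) i : Fin n).val = i.val := rfl
  show G.degree (Fin.castLE (Nat.le_add_right p M) i) = A i
  rw [show G.degree (Fin.castLE (Nat.le_add_right p M) i)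
      = (G.neighborFinset (Fin.castLE (Nat.le_add_right p M) i)).card from rfl]
  have hnb : G.neighborFinset (Fin.castLE (Nat.le_add_right p M) i)
      = Finset.univ.filter (fun v : Fin n => p ≤ v.val ∧ v.val < p + A i) := by
    ext v
    simp only [SimpleGraph.mem_neighborFinset, Finset.mem_filter, Finset.mem_univ, true_and]
    show ((Fin.castLE _ i : Fin n) ≠ v ∧ (r _ v ∨ r v _)) ↔ _
    unfold r f
    constructor
    · rintro ⟨hne, h | h⟩
      · rcases h with ⟨h1, h2⟩
        rw [hu] at h2
        simp only [dif_pos i.isLt, Fin.eta] at h2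
        exact ⟨h1, h2⟩
      · exact absurd h.1 (by rw [hu]; omega)
    · rintro ⟨h1, h2⟩
      refine ⟨fun hv => ?_, Or.inl ⟨h1, ?_⟩⟩
      · rw [← hv, hu] at h1; omega
      · rw [hu]; simp only [dif_pos i.isLt, Fin.eta]; exact h2
  rw [hnb]
  have hcard : (Finset.univ.filter (fun v : Fin n => p ≤ v.val ∧ v.val < p + A i)).card
      = (Finset.range (A i)).card := by
    apply Finset.card_bij (fun v _ => v.val - p)
    · intro v hv
      simp only [Finset.mem_filter, Finset.mem_univ, true_and] at hv
      simp only [Finset.mem_range]; omega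
    · intro v hv w hw h
      simp only [Finset.mem_filter, Finset.mem_univ, true_and] at hv hw
      apply Fin.ext; omega
    · intro j hj
      simp only [Finset.mem_range] at hj
      refine ⟨⟨p + j, by omega⟩, ?_, by simp⟩
      simp only [Finset.mem_filter, Finset.mem_univ, true_and]; omega
  rw [hcard, Finset.card_range]
end
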